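/- Let V be a normed real vector space and δ : V × V → V any function. Let T, T' : L¹([0,1];ℝ) → V be continuous linear maps such that T(𝟙) = T'(𝟙) and, for all f, g ∈ L¹([0,1];ℝ), T(γ(f,g)) = δ(T(f), T(g)) and T'(γ(f,g)) = δ(T'(f), T'(g)). Then T = T'. -/

import Mathlib

open MeasureTheory

/-- Lebesgue measure restricted to `[0,1]`. -/
noncomputable def μ01 : Measure ℝ := volume.restrict (Set.Icc 0 1)

/-- The space `L¹([0,1]; ℝ)`. -/
abbrev L1 : Type := Lp ℝ 1 μ01

/-- `γ : L1 → L1 → L1` is the juxtaposition operation: `γ f g` agrees a.e. with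
`x ↦ f (2x)` on `[0, 1/2)` and with `x ↦ g (2x − 1)` on `[1/2, 1]`. -/
def IsJux (γ : L1 → L1 → L1) : Prop :=
  ∀ f g : L1,
    (∀ᵐ x ∂μ01, x ∈ Set.Ico (0 : ℝ) (1 / 2) → γ f g x = f (2 * x)) ∧
    (∀ᵐ x ∂μ01, x ∈ Set.Icc (1 / 2 : ℝ) 1 → γ f g x = g (2 * x - 1))

/-- `one : L1` is the class of the constant function `1`. -/
def IsOne (one : L1) : Prop := (one : ℝ → ℝ) =ᵐ[μ01] fun _ => (1 : ℝ)

/-- dyadic cell -/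
def dI (n k : ℕ) : Set ℝ := Set.Ico ((k : ℝ) / 2 ^ n) (((k : ℝ) + 1) / 2 ^ n)

lemma dI_meas (n k : ℕ) : MeasurableSet (dI n k) := measurableSet_Ico

lemma dI_zero : dI 0 0 = Set.Ico (0 : ℝ) 1 := by norm_num [dI]

lemma dI_subset {n k : ℕ} (hk : k < 2 ^ n) : dI n k ⊆ Set.Ico (0 : ℝ) 1 := by
  have h2 : (0:ℝ) < 2 ^ n := by positivity
  have hk' : (k : ℝ) + 1 ≤ 2 ^ n := by
    have : (k : ℝ) + 1 ≤ (2 ^ n : ℕ) := by exact_mod_cast Nat.succ_le_of_lt hk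
    simpa using this
  intro x hx
  obtain ⟨h1, h2'⟩ := hx
  constructor
  · have : (0:ℝ) ≤ (k : ℝ) / 2 ^ n := by positivity
    linarith
  · have : ((k : ℝ) + 1) / 2 ^ n ≤ 1 := by
      rw [div_le_one h2]; exact hk'
    linarith

lemma dI_disjoint {n k j : ℕ} (h : k ≠ j) : Disjoint (dI n k) (dI n j) := by
  have h2 : (0:ℝ) < 2 ^ n := by positivity
  rw [dI, dI, Set.Ico_disjoint_Ico]
  rcases lt_or_gt_of_ne h with hlt | hlt
  · refine le_trans (min_le_left _ _) (le_trans ?_ (le_max_right _ _))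
    have hkj : (k:ℝ) + 1 ≤ j := by exact_mod_cast hlt
    exact (div_le_div_iff_of_pos_right h2).2 hkj
  · refine le_trans (min_le_right _ _) (le_trans ?_ (le_max_left _ _))
    have hjk : (j:ℝ) + 1 ≤ k := by exact_mod_cast hlt
    exact (div_le_div_iff_of_pos_right h2).2 hjk

lemma dI_mem_floor {n : ℕ} {x : ℝ} (hx : x ∈ Set.Ico (0:ℝ) 1) :
    x ∈ dI n ⌊x * 2 ^ n⌋₊ ∧ ⌊x * 2 ^ n⌋₊ < 2 ^ n := by
  have h2 : (0:ℝ) < 2 ^ n := by positivity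
  have hx0 : 0 ≤ x * 2 ^ n := mul_nonneg hx.1 (by positivity)
  have hfl : (⌊x * 2 ^ n⌋₊ : ℝ) ≤ x * 2 ^ n := Nat.floor_le hx0
  have hfu : x * 2 ^ n < ⌊x * 2 ^ n⌋₊ + 1 := Nat.lt_floor_add_one _
  refine ⟨⟨?_, ?_⟩, ?_⟩
  · rw [div_le_iff₀ h2]; linarith
  · rw [lt_div_iff₀ h2]; linarith
  · rw [Nat.floor_lt hx0]
    have : x * 2 ^ n < 2 ^ n := by nlinarith [hx.2]
    simpa using this

lemma dI_refine {n m k : ℕ} (hnm : n ≤ m) (hk : k < 2 ^ m) :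
    dI m k ⊆ dI n (k / 2 ^ (m - n)) ∧ k / 2 ^ (m - n) < 2 ^ n := by
  have hpow : (2:ℕ) ^ (m - n) * 2 ^ n = 2 ^ m := by
    rw [← pow_add]; congr 1; omega
  constructor
  · intro x hx
    obtain ⟨h1, h2⟩ := hx
    set q := k / 2 ^ (m - n) with hq
    have hqk : q * 2 ^ (m - n) ≤ k := Nat.div_mul_le_self _ _
    have hkq : k < (q + 1) * 2 ^ (m - n) := by
      rw [← Nat.div_lt_iff_lt_mul (by positivity)]; omega
    have h2m : (0:ℝ) < 2 ^ m := by positivity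
    have h2n : (0:ℝ) < 2 ^ n := by positivity
    have hcast : ((2:ℝ) ^ (m - n)) * 2 ^ n = 2 ^ m := by exact_mod_cast congrArg (Nat.cast : ℕ → ℝ) hpow
    constructor
    · refine le_trans ?_ h1
      rw [div_le_div_iff₀ h2n h2m, ← hcast]
      have : (q:ℝ) * 2 ^ (m - n) ≤ k := by exact_mod_cast hqk
      nlinarith
    · refine lt_of_lt_of_le h2 ?_
      rw [div_le_div_iff₀ h2m h2n, ← hcast]
      have : (k:ℝ) + 1 ≤ ((q:ℝ) + 1) * 2 ^ (m - n) := by exact_mod_cast hkq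
      nlinarith
  · rw [Nat.div_lt_iff_lt_mul (by positivity)]
    calc k < 2 ^ m := hk
    _ = 2 ^ n * 2 ^ (m-n) := by rw [← pow_add]; congr 1; omega

lemma ae01 : ∀ᵐ x ∂μ01, x ∈ Set.Ico (0:ℝ) 1 := by
  have h1 : ∀ᵐ x ∂μ01, x ∈ Set.Icc (0:ℝ) 1 := ae_restrict_mem measurableSet_Icc
  have h2 : ∀ᵐ x ∂μ01, x ≠ 1 := by
    rw [Filter.Eventually]
    rw [mem_ae_iff]
    have : {x : ℝ | x ≠ 1}ᶜ = {1} := by ext y; simp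
    rw [this]
    exact le_antisymm (le_trans (Measure.restrict_apply_le _ _) (by simp)) bot_le
  filter_upwards [h1, h2] with x hx hne
  exact ⟨hx.1, lt_of_le_of_ne hx.2 hne⟩

lemma preimage_null {a b : ℝ} (ha : a ≠ 0) {N : Set ℝ} (hN : volume N = 0) :
    volume ((fun x => a * x + b) ⁻¹' N) = 0 := by
  have heq : (fun x => a * x + b) ⁻¹' N = (a * ·) ⁻¹' ((· + b) ⁻¹' N) := rfl
  have htrans : volume ((· + b) ⁻¹' N) = 0 := by
    rw [measure_preimage_add_right]; exact hN
  rw [heq, Real.volume_preimage_mul_left ha, htrans, mul_zero]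

lemma ae_comp_affine {a b : ℝ} (ha : a ≠ 0) {φ ψ : ℝ → ℝ} (h : φ =ᵐ[μ01] ψ)
    {s : Set ℝ} (hs : ∀ x ∈ s, a * x + b ∈ Set.Icc (0:ℝ) 1) :
    ∀ᵐ x ∂μ01, x ∈ s → φ (a * x + b) = ψ (a * x + b) := by
  set N := {y : ℝ | φ y ≠ ψ y} with hNdef
  have hN : μ01 N = 0 := h
  have hN' : volume (N ∩ Set.Icc 0 1) = 0 := by
    rwa [μ01, Measure.restrict_apply' measurableSet_Icc] at hN
  have hv : volume ((fun x => a * x + b) ⁻¹' (N ∩ Set.Icc 0 1)) = 0 := preimage_null ha hN'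
  have hsub : {x : ℝ | ¬(x ∈ s → φ (a * x + b) = ψ (a * x + b))}
      ⊆ (fun x => a * x + b) ⁻¹' (N ∩ Set.Icc 0 1) := by
    intro x hx
    rw [Set.mem_setOf_eq, Classical.not_imp] at hx
    exact ⟨hx.2, hs x hx.1⟩
  have : μ01 ((fun x => a * x + b) ⁻¹' (N ∩ Set.Icc 0 1)) = 0 :=
    le_antisymm (hv ▸ Measure.restrict_apply_le _ _) bot_le
  exact ae_iff.2 (measure_mono_null hsub this)

lemma gamma_indicator {γ : L1 → L1 → L1} (hγ : IsJux γ) {f g : L1} {A B : Set ℝ}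
    (hA : A ⊆ Set.Ico 0 1) (hB : B ⊆ Set.Ico 0 1)
    (hf : ⇑f =ᵐ[μ01] A.indicator (fun _ => (1:ℝ)))
    (hg : ⇑g =ᵐ[μ01] B.indicator (fun _ => (1:ℝ))) :
    ⇑(γ f g) =ᵐ[μ01]
      ((fun x => 2 * x) ⁻¹' A ∪ (fun x => 2 * x - 1) ⁻¹' B).indicator (fun _ => (1:ℝ)) := by
  obtain ⟨h1, h2⟩ := hγ f g
  have hfa : ∀ᵐ x ∂μ01, x ∈ Set.Icc (0:ℝ) (1/2) →
      f (2 * x + 0) = A.indicator (fun _ => (1:ℝ)) (2 * x + 0) := by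
    apply ae_comp_affine two_ne_zero hf
    intro x hx
    constructor <;> [nlinarith [hx.1]; nlinarith [hx.2]]
  have hgb : ∀ᵐ x ∂μ01, x ∈ Set.Icc (1/2:ℝ) 1 →
      g (2 * x + (-1)) = B.indicator (fun _ => (1:ℝ)) (2 * x + (-1)) := by
    apply ae_comp_affine two_ne_zero hg
    intro x hx
    constructor <;> [nlinarith [hx.1]; nlinarith [hx.2]]
  simp only [add_zero] at hfa
  simp only [← sub_eq_add_neg] at hgb
  filter_upwards [h1, h2, hfa, hgb, ae01] with x hx1 hx2 hxf hxg hmem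
  rcases lt_or_ge x (1/2) with hlt | hge
  · rw [hx1 ⟨hmem.1, hlt⟩, hxf ⟨hmem.1, hlt.le⟩]
    have hnB : x ∉ (fun x => 2 * x - 1) ⁻¹' B := by
      intro hxB
      have := (hB hxB).1
      simp only [Set.mem_preimage] at hxB
      have := (hB hxB).1
      linarith
    by_cases hxA : 2 * x ∈ A
    · rw [Set.indicator_of_mem hxA, Set.indicator_of_mem (Set.mem_union_left _ (show x ∈ (fun x => 2*x) ⁻¹' A from hxA))]
    · rw [Set.indicator_of_notMem hxA, Set.indicator_of_notMem]
      rintro (h | h)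
      · exact hxA h
      · exact hnB h
  · rw [hx2 ⟨hge, hmem.2.le⟩, hxg ⟨hge, hmem.2.le⟩]
    have hnA : x ∉ (fun x => 2 * x) ⁻¹' A := by
      intro hxA
      simp only [Set.mem_preimage] at hxA
      have := (hA hxA).2
      linarith
    by_cases hxB : 2 * x - 1 ∈ B
    · rw [Set.indicator_of_mem hxB, Set.indicator_of_mem (Set.mem_union_right _ (show x ∈ (fun x => 2*x-1) ⁻¹' B from hxB))]
    · rw [Set.indicator_of_notMem hxB, Set.indicator_of_notMem]
      rintro (h | h)
      · exact hnA h
      · exact hxB h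

lemma preimage_double {n k : ℕ} :
    (fun x : ℝ => 2 * x) ⁻¹' dI n k = dI (n + 1) k := by
  have e1 : (k:ℝ)/2^(n+1) = ((k:ℝ)/2^n)/2 := by rw [pow_succ]; ring
  have e2 : ((k:ℝ)+1)/2^(n+1) = (((k:ℝ)+1)/2^n)/2 := by rw [pow_succ]; ring
  ext x
  simp only [Set.mem_preimage, dI, Set.mem_Ico, e1, e2]
  constructor <;> rintro ⟨a, b⟩ <;> exact ⟨by linarith, by linarith⟩

lemma preimage_double_shift {n k : ℕ} (hk : 2 ^ n ≤ k) :
    (fun x : ℝ => 2 * x - 1) ⁻¹' dI n (k - 2 ^ n) = dI (n + 1) k := by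
  set j := k - 2 ^ n with hj
  have hjk : (k:ℝ) = (j:ℝ) + 2 ^ n := by
    have h : j + 2 ^ n = k := Nat.sub_add_cancel hk
    push_cast [← h]
    try ring
  have h2n : (2:ℝ) ^ n ≠ 0 := by positivity
  have e1 : (k:ℝ)/2^(n+1) = ((j:ℝ)/2^n + 1)/2 := by
    rw [hjk, pow_succ]; field_simp
    try ring
  have e2 : ((k:ℝ)+1)/2^(n+1) = (((j:ℝ)+1)/2^n + 1)/2 := by
    rw [hjk, pow_succ]; field_simp
    try ring
  ext x
  simp only [Set.mem_preimage, dI, Set.mem_Ico, e1, e2]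
  constructor <;> rintro ⟨a, b⟩ <;> exact ⟨by linarith, by linarith⟩

def AtLevel (n : ℕ) (s : Set ℝ) : Prop := ∀ k < 2 ^ n, dI n k ⊆ s ∨ Disjoint (dI n k) s

lemma atLevel_mono {n m : ℕ} (h : n ≤ m) {s : Set ℝ} (hs : AtLevel n s) : AtLevel m s := by
  intro k hk
  obtain ⟨hsub, hlt⟩ := dI_refine h hk
  rcases hs _ hlt with h1 | h1
  · exact Or.inl (hsub.trans h1)
  · exact Or.inr (h1.mono_left hsub)

def DyA : Set (Set ℝ) := {s | MeasurableSet s ∧ ∃ n, AtLevel n s}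

lemma DyA_isSetAlgebra : IsSetAlgebra DyA where
  empty_mem := ⟨MeasurableSet.empty, 0, fun k _ => Or.inr (by simp)⟩
  compl_mem s hs := by
    obtain ⟨hm, n, hn⟩ := hs
    refine ⟨hm.compl, n, fun k hk => ?_⟩
    rcases hn k hk with h | h
    · exact Or.inr (Set.disjoint_left.2 fun x hx hxc => hxc (h hx))
    · exact Or.inl (fun x hx hxs => Set.disjoint_left.1 h hx hxs)
  union_mem s t hs ht := by
    obtain ⟨hms, n, hn⟩ := hs
    obtain ⟨hmt, m, hm⟩ := ht
    refine ⟨hms.union hmt, max n m, fun k hk => ?_⟩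
    rcases atLevel_mono (le_max_left n m) hn k hk with h1 | h1
    · exact Or.inl (h1.trans Set.subset_union_left)
    rcases atLevel_mono (le_max_right n m) hm k hk with h2 | h2
    · exact Or.inl (h2.trans Set.subset_union_right)
    · exact Or.inr (h1.union_right h2)

lemma DyA_gen : (inferInstance : MeasurableSpace ℝ) = MeasurableSpace.generateFrom DyA := by
  refine le_antisymm ?_ (MeasurableSpace.generateFrom_le fun s hs => hs.1)
  conv_lhs => rw [(inferInstance : BorelSpace ℝ).measurable_eq, borel_eq_generateFrom_Iio ℝ]
  refine MeasurableSpace.generateFrom_le ?_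
  rintro s ⟨c, rfl⟩
  classical
  have hout : Set.Iio c \ Set.Ico 0 1 ∈ DyA := by
    refine ⟨measurableSet_Iio.diff measurableSet_Ico, 0, fun k hk => ?_⟩
    interval_cases k
    rw [dI_zero]
    exact Or.inr Set.disjoint_sdiff_right
  have hU : ∀ n : ℕ, (⋃ k ∈ ((Finset.range (2^n)).filter
      (fun k : ℕ => ((k:ℝ)+1)/2^n ≤ c) : Finset ℕ), dI n k) ∈ DyA := by
    intro n
    set K : Finset ℕ := (Finset.range (2^n)).filter (fun k : ℕ => ((k:ℝ)+1)/2^n ≤ c) with hK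
    refine ⟨Finset.measurableSet_biUnion _ (fun k _ => dI_meas n k), n, fun k hk => ?_⟩
    by_cases hkK : k ∈ K
    · exact Or.inl (Set.subset_biUnion_of_mem hkK)
    · refine Or.inr (Set.disjoint_iUnion₂_right.2 fun j hj => ?_)
      exact dI_disjoint (fun h => hkK (h ▸ hj))
  have hset : Set.Iio c = (Set.Iio c \ Set.Ico 0 1) ∪
      ⋃ n : ℕ, ⋃ k ∈ ((Finset.range (2^n)).filter (fun k : ℕ => ((k:ℝ)+1)/2^n ≤ c) : Finset ℕ), dI n k := by
    apply Set.Subset.antisymm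
    · intro x hx
      by_cases hx01 : x ∈ Set.Ico (0:ℝ) 1
      · right
        obtain ⟨n, hn⟩ := exists_pow_lt_of_lt_one (sub_pos.2 hx) (by norm_num : (1:ℝ)/2 < 1)
        have h2n : (0:ℝ) < 2^n := by positivity
        have hpow : ((1:ℝ)/2)^n = 1/2^n := by rw [div_pow, one_pow]
        obtain ⟨hmem, hklt⟩ := dI_mem_floor (n := n) hx01
        set k := ⌊x * 2^n⌋₊ with hkdef
        have hfl : (k:ℝ) ≤ x * 2^n := Nat.floor_le (mul_nonneg hx01.1 h2n.le)
        have hub : ((k:ℝ)+1)/2^n ≤ c := by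
          rw [div_le_iff₀ h2n]
          have h3 : (1:ℝ) < (c - x) * 2^n := by
            rw [hpow] at hn
            rw [← div_lt_iff₀ h2n] at *
            linarith [hn]
          nlinarith
        refine Set.mem_iUnion.2 ⟨n, Set.mem_biUnion ?_ hmem⟩
        exact Finset.mem_filter.2 ⟨Finset.mem_range.2 hklt, hub⟩
      · exact Or.inl ⟨hx, hx01⟩
    · rintro x (⟨hx, -⟩ | hx)
      · exact hx
      · simp only [Set.mem_iUnion] at hx
        obtain ⟨n, k, hk, hmem⟩ := hx
        have := (Finset.mem_filter.1 hk).2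
        exact lt_of_lt_of_le hmem.2 this
  rw [hset]
  refine MeasurableSet.union (MeasurableSpace.measurableSet_generateFrom hout) ?_
  exact MeasurableSet.iUnion fun n => MeasurableSpace.measurableSet_generateFrom (hU n)

lemma coeFn_finset_sum {ι : Type*} (K : Finset ι) (f : ι → L1) :
    ⇑(∑ k ∈ K, f k) =ᵐ[μ01] fun x => ∑ k ∈ K, f k x := by
  induction K using Finset.cons_induction with
  | empty => simp only [Finset.sum_empty]; exact Lp.coeFn_zero ℝ 1 μ01
  | cons a K ha ih =>
    rw [Finset.sum_cons]
    filter_upwards [Lp.coeFn_add (f a) (∑ k ∈ K, f k), ih] with x h1 h2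
    simp only [Finset.sum_cons, h1, Pi.add_apply, h2]

/-- two continuous linear maps out of `L¹([0,1];ℝ)` that agree on `𝟙`
and both intertwine the juxtaposition `γ` with a common operation `δ` coincide. -/
theorem stmt_5 {V : Type*} [NormedAddCommGroup V] [NormedSpace ℝ V]
    (δ : V × V → V)
    (γ : L1 → L1 → L1) (hγ : IsJux γ)
    (one : L1) (hone : IsOne one)
    (T T' : L1 →L[ℝ] V)
    (h1 : T one = T' one)
    (hT : ∀ f g : L1, T (γ f g) = δ (T f, T g))
    (hT' : ∀ f g : L1, T' (γ f g) = δ (T' f, T' g)) :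
    T = T' := by
  classical
  haveI hfin : IsFiniteMeasure μ01 :=
    ⟨by rw [μ01, Measure.restrict_apply_univ]; simp [Real.volume_Icc]⟩
  -- Step 1: dyadic indicators are in the agreement set
  have key : ∀ n : ℕ, ∀ k < 2 ^ n, ∃ f : L1, T f = T' f ∧
      ⇑f =ᵐ[μ01] (dI n k).indicator (fun _ => (1:ℝ)) := by
    intro n
    induction n with
    | zero =>
      intro k hk
      norm_num at hk
      subst hk
      refine ⟨one, h1, ?_⟩
      filter_upwards [hone, ae01] with x hx hmem
      rw [hx, dI_zero, Set.indicator_of_mem hmem]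
    | succ n IH =>
      have hzero : ⇑(0 : L1) =ᵐ[μ01] (∅ : Set ℝ).indicator (fun _ => (1:ℝ)) := by
        filter_upwards [Lp.coeFn_zero ℝ 1 μ01] with x hx
        simpa using hx
      intro k hk
      by_cases hkn : k < 2 ^ n
      · obtain ⟨f, hf, hfa⟩ := IH k hkn
        refine ⟨γ f 0, by rw [hT f 0, hT' f 0, hf, map_zero, map_zero], ?_⟩
        have h := gamma_indicator hγ (dI_subset hkn) (Set.empty_subset _) hfa hzero
        rw [Set.preimage_empty, Set.union_empty, preimage_double] at h
        exact h
      · push_neg at hkn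
        have hklt : k - 2 ^ n < 2 ^ n := by
          obtain ⟨m, hm⟩ : ∃ m, 2 ^ n = m := ⟨_, rfl⟩
          rw [pow_succ, hm] at hk
          omega
        obtain ⟨g, hg, hga⟩ := IH _ hklt
        refine ⟨γ 0 g, by rw [hT 0 g, hT' 0 g, hg, map_zero, map_zero], ?_⟩
        have h := gamma_indicator hγ (Set.empty_subset _) (dI_subset hklt) hzero hga
        rw [Set.preimage_empty, Set.empty_union, preimage_double_shift hkn] at h
        exact h
  -- Step 2: indicators of sets in the dyadic algebra are in the agreement set
  have hDyA : ∀ s ∈ DyA, ∀ (hms : MeasurableSet s) (hμs : μ01 s ≠ ⊤) (c : ℝ),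
      T (indicatorConstLp 1 hms hμs c) = T' (indicatorConstLp 1 hms hμs c) := by
    rintro s ⟨hms', n, hlev⟩ hms hμs c
    set K : Finset ℕ := (Finset.range (2 ^ n)).filter (fun k => dI n k ⊆ s) with hK
    have hchoose : ∀ k : {k // k ∈ K}, ∃ f : L1, T f = T' f ∧
        ⇑f =ᵐ[μ01] (dI n k.1).indicator (fun _ => (1:ℝ)) := fun k =>
      key n k.1 (Finset.mem_range.1 (Finset.mem_filter.1 k.2).1)
    choose F hTF hFa using hchoose
    set G : L1 := ∑ k ∈ K.attach, F k with hG
    have hTG : T G = T' G := by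
      rw [hG, map_sum, map_sum]
      exact Finset.sum_congr rfl fun k _ => hTF k
    have hGa : ⇑G =ᵐ[μ01]
        fun x => ∑ k ∈ K.attach, (dI n k.1).indicator (fun _ => (1:ℝ)) x := by
      have hall : ∀ᵐ x ∂μ01, ∀ k : {k // k ∈ K},
          (F k : ℝ → ℝ) x = (dI n k.1).indicator (fun _ => (1:ℝ)) x :=
        ae_all_iff.2 fun k => hFa k
      filter_upwards [coeFn_finset_sum K.attach F, hall] with x hx1 hx2
      rw [hx1]
      exact Finset.sum_congr rfl fun k _ => hx2 k
    have heq : indicatorConstLp 1 hms hμs c = c • G := by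
      apply Lp.ext
      filter_upwards [indicatorConstLp_coeFn (p := 1) (μ := μ01) (hs := hms) (hμs := hμs) (c := c), Lp.coeFn_smul c G, hGa, ae01]
        with x hind hsmul hGx hmem
      rw [hind, hsmul, Pi.smul_apply, hGx, smul_eq_mul]
      by_cases hxs : x ∈ s
      · rw [Set.indicator_of_mem hxs]
        obtain ⟨hmemcell, hklt⟩ := dI_mem_floor (n := n) hmem
        set k₀ := ⌊x * 2 ^ n⌋₊ with hk₀
        have hk₀s : dI n k₀ ⊆ s := by
          rcases hlev k₀ hklt with h | h
          · exact h
          · exact absurd hxs (Set.disjoint_left.1 h hmemcell)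
        have hk₀K : k₀ ∈ K := Finset.mem_filter.2 ⟨Finset.mem_range.2 hklt, hk₀s⟩
        have hsum : (∑ k ∈ K.attach, (dI n k.1).indicator (fun _ => (1:ℝ)) x) = 1 := by
          rw [Finset.sum_attach K (fun k => (dI n k).indicator (fun _ => (1:ℝ)) x)]
          rw [Finset.sum_eq_single_of_mem k₀ hk₀K]
          · exact Set.indicator_of_mem hmemcell _
          · intro j hjK hne
            exact Set.indicator_of_notMem
              (fun hxj => Set.disjoint_left.1 (dI_disjoint hne) hxj hmemcell) _
        rw [hsum, mul_one]
      · rw [Set.indicator_of_notMem hxs]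
        have hsum : (∑ k ∈ K.attach, (dI n k.1).indicator (fun _ => (1:ℝ)) x) = 0 := by
          refine Finset.sum_eq_zero fun k _ => ?_
          refine Set.indicator_of_notMem (fun hxk => hxs ?_) _
          exact (Finset.mem_filter.1 k.2).2 hxk
        rw [hsum, mul_zero]
    rw [heq, T.map_smul, T'.map_smul, hTG]
  -- Step 3: conclude via measure density and Lp.induction
  haveI : Fact ((1:ENNReal) ≠ ⊤) := ⟨ENNReal.one_ne_top⟩
  have hMD : μ01.MeasureDense DyA :=
    Measure.MeasureDense.of_generateFrom_isSetAlgebra_finite μ01 DyA_isSetAlgebra DyA_gen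
  have main : ∀ f : L1, T f = T' f := by
    refine Lp.induction (p := 1) ENNReal.one_ne_top (fun f => T f = T' f) ?_ ?_ ?_
    · intro c s hs hμs
      rw [Lp.simpleFunc.coe_indicatorConst]
      have hcl := hMD.indicatorConstLp_subset_closure 1 c
      have hmem : indicatorConstLp 1 hs hμs.ne c ∈
          closure {f : L1 | ∃ (t : Set ℝ) (ht : t ∈ DyA) (hμt : μ01 t ≠ ⊤),
            indicatorConstLp 1 (hMD.measurable t ht) hμt c = f} :=
        hcl ⟨s, hs, hμs.ne, rfl⟩
      have hsub : {f : L1 | ∃ (t : Set ℝ) (ht : t ∈ DyA) (hμt : μ01 t ≠ ⊤),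
          indicatorConstLp 1 (hMD.measurable t ht) hμt c = f} ⊆ {g : L1 | T g = T' g} := by
        rintro - ⟨t, ht, hμt, rfl⟩
        exact hDyA t ht _ hμt c
      exact ((isClosed_eq T.continuous T'.continuous).closure_subset_iff.2 hsub) hmem
    · intro f g hf hg hdisj hPf hPg
      rw [map_add, map_add, hPf, hPg]
    · exact isClosed_eq T.continuous T'.continuous
  exact ContinuousLinearMap.ext main
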